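/- Let R be a commutative ring, A an R-module, and {,} a derivative Lie algebra structure on A with symbol λ satisfying λ_{f·a} = f·λ_a + Λ(df ⊗ a) for a squiggle Λ. Antisymmetry of the bracket forces the squiggle symmetry identity: Λ(df ⊗ a)(g)·b = −Λ(dg ⊗ b)(f)·a for all a, b ∈ A and f, g ∈ R. -/
import Mathlib


/-- For a derivative Lie algebra on an `R`-module `A` with symbol `λ` and squiggle `Λ`
(so `λ_{f·a} = f·λ_a + Λ(df⊗a)`), antisymmetry forces the squiggle symmetry identity
`Λ(df⊗a)(g)·b = −Λ(dg⊗b)(f)·a`. -/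
theorem stmt6 (R : Type*) [CommRing R] [Algebra ℝ R]
    (A : Type*) [AddCommGroup A] [Module ℝ A] [Module R A]
    (br : A → A → A)
    (hanti : ∀ a b, br a b = - br b a)
    (hadd : ∀ a b c, br (a + b) c = br a c + br b c)
    (hsmul : ∀ (r : ℝ) (a b : A), br (r • a) b = r • br a b)
    (lam : A → Derivation ℝ R R)
    (hleib : ∀ (a : A) (f : R) (b : A), br a (f • b) = f • br a b + lam a f • b)
    (Lam : R → A → Derivation ℝ R R)
    (hsymb : ∀ (f : R) (a : A) (g : R), lam (f • a) g = f * lam a g + Lam f a g) :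
    ∀ (a b : A) (f g : R), (Lam f a g) • b = -((Lam g b f) • a) := by
  intro a b f g
  have E : br (f • a) (g • b) = - br (g • b) (f • a) := hanti _ _
  rw [hleib, hleib, hsymb, hsymb, hanti (f • a) b, hanti (g • b) a,
      hleib b f a, hleib a g b, hanti b a] at E
  linear_combination (norm := module) E
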